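/- Fixed-point theorem for QK + □^{n+1}⊥: for any natural number n and any formula A(p) of predicate modal logic that is modalized in p (every occurrence of p lies in the scope of □), there exists a formula B, containing only predicate symbols and free variables occurring in A(p) and not containing p, such that QK proves □^{n+1}⊥ → (B ↔ A(B)). Moreover B is effectively computable from A(p). -/

import Mathlib

namespace PML

/-- Formulas of predicate modal logic, with propositional variables (language L''). -/
inductive Fml : Type
  | verum : Fml
  | falsum : Fml
  | pvar (q : ℕ) : Fml
  | pred (P : ℕ) (args : List ℕ) : Fml
  | neg (A : Fml) : Fml
  | imp (A B : Fml) : Fml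
  | all (u : ℕ) (A : Fml) : Fml
  | box (A : Fml) : Fml

namespace Fml

def lor (A B : Fml) : Fml := A.neg.imp B
def land (A B : Fml) : Fml := (A.imp B.neg).neg
def iff (A B : Fml) : Fml := (A.imp B).land (B.imp A)
def ex (u : ℕ) (A : Fml) : Fml := (Fml.all u A.neg).neg
def boxdot (A : Fml) : Fml := A.box.land A

def boxIter : ℕ → Fml → Fml
  | 0, A => A
  | n + 1, A => (boxIter n A).box

/-- Free variables. -/
def free : Fml → Finset ℕ
  | pred _ args => args.toFinset
  | neg A => A.free
  | imp A B => A.free ∪ B.free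
  | all u A => A.free.erase u
  | box A => A.free
  | _ => ∅

/-- Bound variables. -/
def bound : Fml → Finset ℕ
  | neg A => A.bound
  | imp A B => A.bound ∪ B.bound
  | all u A => insert u A.bound
  | box A => A.bound
  | _ => ∅

/-- Propositional variables occurring in a formula. -/
def pvars : Fml → Finset ℕ
  | pvar q => {q}
  | neg A => A.pvars
  | imp A B => A.pvars ∪ B.pvars
  | all _ A => A.pvars
  | box A => A.pvars
  | _ => ∅

/-- Predicate symbols occurring in a formula. -/
def preds : Fml → Finset ℕ
  | pred P _ => {P}
  | neg A => A.preds
  | imp A B => A.preds ∪ B.preds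
  | all _ A => A.preds
  | box A => A.preds
  | _ => ∅

/-- Predicate symbols together with the arity they are used with. -/
def predSig : Fml → Finset (ℕ × ℕ)
  | pred P args => {(P, args.length)}
  | neg A => A.predSig
  | imp A B => A.predSig ∪ B.predSig
  | all _ A => A.predSig
  | box A => A.predSig
  | _ => ∅

/-- Rename free occurrences of the variable `u` to `v`. -/
def rename : Fml → ℕ → ℕ → Fml
  | pred P args, u, v => pred P (args.map fun x => if x = u then v else x)
  | neg A, u, v => (A.rename u v).neg
  | imp A B, u, v => (A.rename u v).imp (B.rename u v)
  | all w A, u, v => if w = u then all w A else all w (A.rename u v)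
  | box A, u, v => (A.rename u v).box
  | A, _, _ => A

/-- Substitution of a formula for a propositional variable. -/
def psub : Fml → ℕ → Fml → Fml
  | pvar q, p, B => if q = p then B else pvar q
  | neg A, p, B => (A.psub p B).neg
  | imp A C, p, B => (A.psub p B).imp (C.psub p B)
  | all u A, p, B => all u (A.psub p B)
  | box A, p, B => (A.psub p B).box
  | A, _, _ => A

/-- Simultaneous substitution of formulas for all propositional variables. -/
def msub : Fml → (ℕ → Fml) → Fml
  | pvar q, σ => σ q
  | neg A, σ => (A.msub σ).neg
  | imp A C, σ => (A.msub σ).imp (C.msub σ)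
  | all u A, σ => all u (A.msub σ)
  | box A, σ => (A.msub σ).box
  | A, _ => A

/-- Depth-indexed substitution: occurrences of `p` at modal depth `i` are replaced by `σ i`. -/
def dsub : Fml → ℕ → (ℕ → Fml) → Fml
  | pvar q, p, σ => if q = p then σ 0 else pvar q
  | neg A, p, σ => (A.dsub p σ).neg
  | imp A C, p, σ => (A.dsub p σ).imp (C.dsub p σ)
  | all u A, p, σ => all u (A.dsub p σ)
  | box A, p, σ => (A.dsub p (fun i => σ (i + 1))).box
  | A, _, _ => A

/-- `A(p)[B_0,…,B_k]` for a list `[B_0,…,B_k]`. -/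
def dsubL (A : Fml) (p : ℕ) (L : List Fml) : Fml := A.dsub p (fun i => L.getD i verum)

/-- `A^{⊤(n)}`: replace every boxed subformula at modal depth `n` by `⊤`. -/
def eraseT : ℕ → Fml → Fml
  | 0, box _ => verum
  | n + 1, box A => (eraseT n A).box
  | n, neg A => (eraseT n A).neg
  | n, imp A B => (eraseT n A).imp (eraseT n B)
  | n, all u A => all u (eraseT n A)
  | _, A => A

/-- `occursAt p A d`: the propositional variable `p` occurs in `A` at modal depth `d`. -/
def occursAt (p : ℕ) : Fml → ℕ → Prop
  | pvar q, d => q = p ∧ d = 0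
  | neg A, d => occursAt p A d
  | imp A B, d => occursAt p A d ∨ occursAt p B d
  | all _ A, d => occursAt p A d
  | box A, d => ∃ d', d = d' + 1 ∧ occursAt p A d'
  | _, _ => False

/-- `A` is modalized in `p`: no occurrence of `p` at depth `0`. -/
def Modalized (p : ℕ) (A : Fml) : Prop := ¬ occursAt p A 0

/-- Conjunction of a list of formulas. -/
def conj : List Fml → Fml
  | [] => verum
  | A :: L => A.land (conj L)

/-- The canonical fixed-point sequence:
`A_0 := A^{⊤(0)}(p)[⊤]`, `A_{k+1} := A^{⊤(k+1)}(p)[⊤, A_k, …, A_0]`. -/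
def fpSeq (p : ℕ) (A : Fml) : ℕ → Fml
  | 0 => (eraseT 0 A).dsub p (fun _ => verum)
  | n + 1 => (eraseT (n + 1) A).dsub p
      (fun i => match i with
        | 0 => verum
        | j + 1 => fpSeq p A (n - j))
  termination_by k => k
  decreasing_by omega

end Fml

open Fml

/-- Axioms of predicate logic, together with the modal distribution axiom K. -/
inductive Ax : Fml → Prop
  | imp1 (A B : Fml) : Ax (A.imp (B.imp A))
  | imp2 (A B C : Fml) : Ax ((A.imp (B.imp C)).imp ((A.imp B).imp (A.imp C)))
  | contra (A B : Fml) : Ax ((A.neg.imp B.neg).imp (B.imp A))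
  | verum : Ax Fml.verum
  | exfalso (A : Fml) : Ax (Fml.falsum.imp A)
  | negE (A : Fml) : Ax (A.neg.imp (A.imp Fml.falsum))
  | negI (A : Fml) : Ax ((A.imp Fml.falsum).imp A.neg)
  | allE (A : Fml) (u v : ℕ) (h : v ∉ A.bound) : Ax ((Fml.all u A).imp (A.rename u v))
  | allK (A B : Fml) (u : ℕ) :
      Ax ((Fml.all u (A.imp B)).imp ((Fml.all u A).imp (Fml.all u B)))
  | allV (A : Fml) (u : ℕ) (h : u ∉ A.free) : Ax (A.imp (Fml.all u A))
  | k (A B : Fml) : Ax (((A.imp B).box).imp (A.box.imp B.box))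

/-- Hilbert-style provability from the base axioms plus extra axioms `Ext`,
closed under modus ponens, necessitation and generalization. -/
inductive Prf (Ext : Fml → Prop) : Fml → Prop
  | ax {A : Fml} : Ax A → Prf Ext A
  | ext {A : Fml} : Ext A → Prf Ext A
  | mp {A B : Fml} : Prf Ext (A.imp B) → Prf Ext A → Prf Ext B
  | nec {A : Fml} : Prf Ext A → Prf Ext A.box
  | gen {A : Fml} (u : ℕ) : Prf Ext A → Prf Ext (Fml.all u A)

/-- The smallest normal predicate modal logic QK. -/
def QK : Fml → Prop := Prf (fun _ => False)

inductive Ax4 : Fml → Prop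
  | four (A : Fml) : Ax4 (A.box.imp A.box.box)

/-- QK4 : QK plus the axiom 4. -/
def QK4 : Fml → Prop := Prf Ax4

inductive AxL : Fml → Prop
  | lob (A : Fml) : AxL (((A.box.imp A).box).imp A.box)

/-- QGL : QK plus Löb's axiom. -/
def QGL : Fml → Prop := Prf AxL

/-- NQGL : QK4 plus the infinitary rule BL. -/
inductive NQGL : Fml → Prop
  | ax {A : Fml} : Ax A → NQGL A
  | four (A : Fml) : NQGL (A.box.imp A.box.box)
  | mp {A B : Fml} : NQGL (A.imp B) → NQGL A → NQGL B
  | nec {A : Fml} : NQGL A → NQGL A.box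
  | gen {A : Fml} (u : ℕ) : NQGL A → NQGL (Fml.all u A)
  | bl {A : Fml} : (∀ n : ℕ, NQGL ((boxIter (n + 1) Fml.falsum).imp A)) → NQGL A

/-- Σ-formulas. -/
inductive IsSigma : Fml → Prop
  | box (A : Fml) : IsSigma A.box
  | lor {A B : Fml} : IsSigma A → IsSigma B → IsSigma (A.lor B)
  | land {A B : Fml} : IsSigma A → IsSigma B → IsSigma (A.land B)
  | ex {A : Fml} (u : ℕ) : IsSigma A → IsSigma (Fml.ex u A)

/- ## Kripke semantics -/

structure KFrame where
  W : Type
  R : W → W → Prop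
  Dom : Type
  D : W → Set Dom
  Dne : ∀ w, (D w).Nonempty
  mono : ∀ {w w'}, R w w' → D w ⊆ D w'

structure KModel extends KFrame where
  I : W → ℕ → List Dom → Prop
  V : W → ℕ → Prop

def Sat (M : KModel) : Fml → M.W → (ℕ → M.Dom) → Prop
  | .verum, _, _ => True
  | .falsum, _, _ => False
  | .pvar q, w, _ => M.V w q
  | .pred P args, w, ρ => M.I w P (args.map ρ)
  | .neg A, w, ρ => ¬ Sat M A w ρ
  | .imp A B, w, ρ => Sat M A w ρ → Sat M B w ρ
  | .all u A, w, ρ => ∀ a ∈ M.D w, Sat M A w (Function.update ρ u a)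
  | .box A, w, ρ => ∀ v, M.R w v → Sat M A v ρ

/-- Validity in a model. -/
def MVal (M : KModel) (A : Fml) : Prop :=
  ∀ (w : M.W) (ρ : ℕ → M.Dom), (∀ x, ρ x ∈ M.D w) → Sat M A w ρ

/-- Validity on a frame. -/
def FVal (F : KFrame) (A : Fml) : Prop :=
  ∀ (I : F.W → ℕ → List F.Dom → Prop) (V : F.W → ℕ → Prop),
    MVal { toKFrame := F, I := I, V := V } A

/-- Smoryński's model. -/
def MS : KModel where
  W := ℕ
  R := fun m n => n < m
  Dom := ℕ
  D := fun n => {m | n ≤ m}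
  Dne := fun n => ⟨n, le_refl n⟩
  mono := by intro w w' h x hx; simp only [Set.mem_setOf_eq] at *; omega
  I := fun w P L => P = 0 ∧ ∀ m ∈ L, m ≠ w + 1
  V := fun _ _ => False

/-- The finite truncations of Smoryński's model. -/
def Mk (k : ℕ) : KModel where
  W := Fin (k + 1)
  R := fun m n => (n : ℕ) < (m : ℕ)
  Dom := ℕ
  D := fun n => {m | (n : ℕ) ≤ m ∧ m ≤ k + 2}
  Dne := fun n => ⟨(n : ℕ), by simp only [Set.mem_setOf_eq]; have := n.isLt; omega⟩
  mono := by intro w w' h x hx; simp only [Set.mem_setOf_eq] at *; omega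
  I := fun w P L => P = 0 ∧ ∀ m ∈ L, m ≠ (w : ℕ) + 1
  V := fun _ _ => False

/-- `A` contains only the unary predicate symbol `P` (coded `0`) and no propositional variables. -/
def OnlyP (A : Fml) : Prop := A.predSig ⊆ {(0, 1)} ∧ A.pvars = ∅

/-- The atomic formula `P(u)`. -/
def Pat (u : ℕ) : Fml := Fml.pred 0 [u]

/-- `h(F) ≤ n`: there is no chain of `n+1` successive `R`-steps. -/
def HeightLe (F : KFrame) (n : ℕ) : Prop :=
  ∀ c : ℕ → F.W, ¬ ∀ i < n + 1, F.R (c i) (c (i + 1))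

end PML

namespace PML
open Fml

/-- `□^m ⊥`. -/
abbrev bbot (m : ℕ) : Fml := boxIter m Fml.falsum

theorem qk_I (A : Fml) : QK (A.imp A) :=
  Prf.mp (Prf.mp (Prf.ax (Ax.imp2 A (A.imp A) A)) (Prf.ax (Ax.imp1 A (A.imp A))))
    (Prf.ax (Ax.imp1 A A))

theorem qk_lift {Hf A : Fml} (h : QK A) : QK (Hf.imp A) :=
  Prf.mp (Prf.ax (Ax.imp1 A Hf)) h

theorem qk_mp2 {Hf A B : Fml} (h1 : QK (Hf.imp (A.imp B))) (h2 : QK (Hf.imp A)) :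
    QK (Hf.imp B) :=
  Prf.mp (Prf.mp (Prf.ax (Ax.imp2 Hf A B)) h1) h2

theorem qk_trans {A B C : Fml} (h1 : QK (A.imp B)) (h2 : QK (B.imp C)) : QK (A.imp C) :=
  qk_mp2 (qk_lift h2) h1

/-- Provability from a list of hypotheses (modus ponens only). -/
inductive PrfT : List Fml → Fml → Prop
  | thm {Γ A} : QK A → PrfT Γ A
  | hyp {Γ A} : A ∈ Γ → PrfT Γ A
  | mp {Γ A B} : PrfT Γ (A.imp B) → PrfT Γ A → PrfT Γ B

theorem PrfT.ded_aux {Γ' : List Fml} {B : Fml} (h : PrfT Γ' B) :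
    ∀ {A : Fml} {Γ : List Fml}, Γ' = A :: Γ → PrfT Γ (A.imp B) := by
  induction h with
  | thm h => intro A Γ _; exact .mp (.thm (Prf.ax (Ax.imp1 _ _))) (.thm h)
  | @hyp X hmem =>
      intro A Γ hEq; subst hEq
      rcases List.mem_cons.mp hmem with h | h
      · subst h; exact .thm (qk_I _)
      · exact .mp (.thm (Prf.ax (Ax.imp1 _ _))) (.hyp h)
  | mp _ _ ih1 ih2 =>
      intro A Γ hEq
      exact .mp (.mp (.thm (Prf.ax (Ax.imp2 _ _ _))) (ih1 hEq)) (ih2 hEq)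

theorem PrfT.ded {A B : Fml} {Γ : List Fml} (h : PrfT (A :: Γ) B) : PrfT Γ (A.imp B) :=
  h.ded_aux rfl

theorem PrfT.run_aux {Γ : List Fml} {A : Fml} (h : PrfT Γ A) : Γ = [] → QK A := by
  induction h with
  | thm h => intro _; exact h
  | hyp hmem => intro hEq; subst hEq; exact absurd hmem List.not_mem_nil
  | mp _ _ ih1 ih2 => intro hEq; exact Prf.mp (ih1 hEq) (ih2 hEq)

theorem PrfT.run {A : Fml} (h : PrfT [] A) : QK A := h.run_aux rfl

theorem PrfT.h0 {Γ : List Fml} {A : Fml} : PrfT (A :: Γ) A :=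
  .hyp (List.mem_cons_self)
theorem PrfT.h1 {Γ : List Fml} {A B : Fml} : PrfT (B :: A :: Γ) A :=
  .hyp (List.mem_cons_of_mem _ (List.mem_cons_self))
theorem PrfT.h2 {Γ : List Fml} {A B C : Fml} : PrfT (C :: B :: A :: Γ) A :=
  .hyp (List.mem_cons_of_mem _ (List.mem_cons_of_mem _ (List.mem_cons_self)))
theorem PrfT.h3 {Γ : List Fml} {A B C D : Fml} : PrfT (D :: C :: B :: A :: Γ) A :=
  .hyp (List.mem_cons_of_mem _
    (List.mem_cons_of_mem _ (List.mem_cons_of_mem _ (List.mem_cons_self))))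

theorem PrfT.negElim {Γ : List Fml} {X : Fml} (h1 : PrfT Γ X.neg) (h2 : PrfT Γ X) :
    PrfT Γ Fml.falsum :=
  .mp (.mp (.thm (Prf.ax (Ax.negE X))) h1) h2

theorem qk_contrapose (X Y : Fml) : QK ((X.imp Y).imp (Y.neg.imp X.neg)) := by
  apply PrfT.run
  apply PrfT.ded; apply PrfT.ded
  exact .mp (.thm (Prf.ax (Ax.negI X)))
    (PrfT.ded (PrfT.negElim .h1 (.mp .h2 .h0)))

theorem qk_impCongrT (X Y X' Y' : Fml) :
    QK ((Y.imp X).imp ((X'.imp Y').imp ((X.imp X').imp (Y.imp Y')))) := by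
  apply PrfT.run
  apply PrfT.ded; apply PrfT.ded; apply PrfT.ded; apply PrfT.ded
  exact .mp .h2 (.mp .h1 (.mp .h3 .h0))

theorem qk_landIntro (P Q : Fml) : QK (P.imp (Q.imp (P.land Q))) := by
  apply PrfT.run
  apply PrfT.ded; apply PrfT.ded
  exact .mp (.thm (Prf.ax (Ax.negI (P.imp Q.neg))))
    (PrfT.ded (PrfT.negElim (.mp .h0 .h2) .h1))

theorem qk_negCongr {Hf X Y : Fml} (h : QK (Hf.imp (X.imp Y))) :
    QK (Hf.imp (Y.neg.imp X.neg)) :=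
  qk_mp2 (qk_lift (qk_contrapose X Y)) h

theorem qk_impCongr {Hf X Y X' Y' : Fml} (h1 : QK (Hf.imp (Y.imp X)))
    (h2 : QK (Hf.imp (X'.imp Y'))) : QK (Hf.imp ((X.imp X').imp (Y.imp Y'))) :=
  qk_mp2 (qk_mp2 (qk_lift (qk_impCongrT X Y X' Y')) h1) h2

theorem qk_land {Hf P Q : Fml} (h1 : QK (Hf.imp P)) (h2 : QK (Hf.imp Q)) :
    QK (Hf.imp (P.land Q)) :=
  qk_mp2 (qk_mp2 (qk_lift (qk_landIntro P Q)) h1) h2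

theorem qk_box_mono {X Y : Fml} (h : QK (X.imp Y)) : QK (X.box.imp Y.box) :=
  Prf.mp (Prf.ax (Ax.k X Y)) (Prf.nec h)

theorem qk_box_step {Hf X Y : Fml} (h : QK (Hf.imp (X.imp Y))) :
    QK (Hf.box.imp (X.box.imp Y.box)) :=
  qk_trans (qk_box_mono h) (Prf.ax (Ax.k X Y))

theorem qk_all_mono {Hf X Y : Fml} (u : ℕ) (hfree : u ∉ Hf.free)
    (h : QK (Hf.imp (X.imp Y))) : QK (Hf.imp ((Fml.all u X).imp (Fml.all u Y))) := by
  have g1 : QK (Fml.all u (Hf.imp (X.imp Y))) := Prf.gen u h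
  have g2 : QK ((Fml.all u Hf).imp (Fml.all u (X.imp Y))) :=
    Prf.mp (Prf.ax (Ax.allK Hf (X.imp Y) u)) g1
  have g3 : QK (Hf.imp (Fml.all u Hf)) := Prf.ax (Ax.allV Hf u hfree)
  have g4 : QK ((Fml.all u (X.imp Y)).imp ((Fml.all u X).imp (Fml.all u Y))) :=
    Prf.ax (Ax.allK X Y u)
  exact qk_trans (qk_trans g3 g2) g4

theorem bbot_free (m : ℕ) : (bbot m).free = ∅ := by
  induction m with
  | zero => rfl
  | succ m ih => exact ih

theorem bbot_mono (m : ℕ) : QK ((bbot m).imp (bbot (m+1))) := by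
  induction m with
  | zero => exact Prf.ax (Ax.exfalso _)
  | succ m ih => exact qk_box_mono ih

theorem bbot_le {j k : ℕ} (h : j ≤ k) : QK ((bbot j).imp (bbot k)) := by
  induction h with
  | refl => exact qk_I _
  | step _ ih => exact qk_trans ih (bbot_mono _)

theorem depth0 (p k : ℕ) (B C : Fml)
    (hBC : ∀ j ≤ k, QK ((bbot j).imp (B.imp C)) ∧ QK ((bbot j).imp (C.imp B))) :
    ∀ (A : Fml) (j : ℕ), j ≤ k →
      QK ((bbot j).imp ((A.psub p B).imp (A.psub p C))) ∧
      QK ((bbot j).imp ((A.psub p C).imp (A.psub p B))) := by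
  intro A
  induction A with
  | verum => exact fun j _ => ⟨qk_lift (qk_I _), qk_lift (qk_I _)⟩
  | falsum => exact fun j _ => ⟨qk_lift (qk_I _), qk_lift (qk_I _)⟩
  | pred P args => exact fun j _ => ⟨qk_lift (qk_I _), qk_lift (qk_I _)⟩
  | pvar q =>
      intro j hj
      by_cases hq : q = p
      · simpa [psub, hq] using hBC j hj
      · simp only [psub, if_neg hq]
        exact ⟨qk_lift (qk_I _), qk_lift (qk_I _)⟩
  | neg A ih =>
      intro j hj
      obtain ⟨h1, h2⟩ := ih j hj
      exact ⟨qk_negCongr h2, qk_negCongr h1⟩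
  | imp A A' ihA ihA' =>
      intro j hj
      obtain ⟨hA1, hA2⟩ := ihA j hj
      obtain ⟨hA'1, hA'2⟩ := ihA' j hj
      exact ⟨qk_impCongr hA2 hA'1, qk_impCongr hA1 hA'2⟩
  | all u A ih =>
      intro j hj
      obtain ⟨h1, h2⟩ := ih j hj
      have hfree : u ∉ (bbot j).free := by simp [bbot_free]
      exact ⟨qk_all_mono u hfree h1, qk_all_mono u hfree h2⟩
  | box A ih =>
      intro j hj
      rcases j with _ | j'
      · exact ⟨Prf.ax (Ax.exfalso _), Prf.ax (Ax.exfalso _)⟩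
      · obtain ⟨h1, h2⟩ := ih j' (Nat.le_of_succ_le hj)
        exact ⟨qk_box_step h1, qk_box_step h2⟩

theorem mod_step (p k : ℕ) (B C : Fml)
    (hBC : ∀ j ≤ k, QK ((bbot j).imp (B.imp C)) ∧ QK ((bbot j).imp (C.imp B))) :
    ∀ A : Fml, Modalized p A →
      QK ((bbot (k+1)).imp ((A.psub p B).imp (A.psub p C))) ∧
      QK ((bbot (k+1)).imp ((A.psub p C).imp (A.psub p B))) := by
  intro A
  induction A with
  | verum => exact fun _ => ⟨qk_lift (qk_I _), qk_lift (qk_I _)⟩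
  | falsum => exact fun _ => ⟨qk_lift (qk_I _), qk_lift (qk_I _)⟩
  | pred P args => exact fun _ => ⟨qk_lift (qk_I _), qk_lift (qk_I _)⟩
  | pvar q =>
      intro hm
      have hq : ¬ q = p := fun h => hm ⟨h, rfl⟩
      simp only [psub, if_neg hq]
      exact ⟨qk_lift (qk_I _), qk_lift (qk_I _)⟩
  | neg A ih =>
      intro hm
      obtain ⟨h1, h2⟩ := ih hm
      exact ⟨qk_negCongr h2, qk_negCongr h1⟩
  | imp A A' ihA ihA' =>
      intro hm
      obtain ⟨hA1, hA2⟩ := ihA (fun h => hm (Or.inl h))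
      obtain ⟨hA'1, hA'2⟩ := ihA' (fun h => hm (Or.inr h))
      exact ⟨qk_impCongr hA2 hA'1, qk_impCongr hA1 hA'2⟩
  | all u A ih =>
      intro hm
      obtain ⟨h1, h2⟩ := ih hm
      have hfree : u ∉ (bbot (k+1)).free := by simp [bbot_free]
      exact ⟨qk_all_mono u hfree h1, qk_all_mono u hfree h2⟩
  | box A _ =>
      intro _
      obtain ⟨h1, h2⟩ := depth0 p k B C hBC A k le_rfl
      exact ⟨qk_box_step h1, qk_box_step h2⟩

/-- Iterated substitution of `⊤`: `fpE 0 = ⊤`, `fpE (k+1) = A(fpE k)`. -/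
def fpE (p : ℕ) (A : Fml) : ℕ → Fml
  | 0 => Fml.verum
  | k + 1 => A.psub p (fpE p A k)

theorem fpE_fix (p : ℕ) (A : Fml) (hmod : Modalized p A) :
    ∀ k, QK ((bbot k).imp ((fpE p A k).imp (fpE p A (k+1)))) ∧
         QK ((bbot k).imp ((fpE p A (k+1)).imp (fpE p A k))) := by
  intro k
  induction k with
  | zero => exact ⟨Prf.ax (Ax.exfalso _), Prf.ax (Ax.exfalso _)⟩
  | succ k ih =>
      have hBC : ∀ j ≤ k, QK ((bbot j).imp ((fpE p A k).imp (fpE p A (k+1)))) ∧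
          QK ((bbot j).imp ((fpE p A (k+1)).imp (fpE p A k))) := by
        intro j hj
        exact ⟨qk_trans (bbot_le hj) ih.1, qk_trans (bbot_le hj) ih.2⟩
      have h := mod_step p k _ _ hBC A hmod
      exact h

theorem psub_pvars {p : ℕ} {B : Fml} : ∀ A : Fml, A.pvars ⊆ {p} →
    (A.psub p B).pvars ⊆ B.pvars := by
  intro A
  induction A with
  | verum => intro _; simp [psub, pvars]
  | falsum => intro _; simp [psub, pvars]
  | pred P args => intro _; simp [psub, pvars]
  | pvar q =>
      intro h
      have hq : q = p := by simpa [pvars] using h (Finset.mem_singleton_self q)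
      simp [psub, hq]
  | neg A ih => intro h; exact ih h
  | imp A A' ihA ihA' =>
      intro h
      simp only [pvars, Finset.union_subset_iff] at h
      simp only [psub, pvars]
      exact Finset.union_subset (ihA h.1) (ihA' h.2)
  | all u A ih => intro h; exact ih h
  | box A ih => intro h; exact ih h

theorem psub_preds {p : ℕ} {B : Fml} : ∀ A : Fml,
    (A.psub p B).preds ⊆ A.preds ∪ B.preds := by
  intro A
  induction A with
  | verum => simp [psub, preds]
  | falsum => simp [psub, preds]
  | pred P args => simp [psub, preds]
  | pvar q =>
      by_cases hq : q = p
      · simp [psub, preds, hq]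
      · simp [psub, preds, if_neg hq]
  | neg A ih => exact ih
  | imp A A' ihA ihA' =>
      simp only [psub, preds]
      intro x hx
      rcases Finset.mem_union.mp hx with h | h
      · rcases Finset.mem_union.mp (ihA h) with h' | h'
        · exact Finset.mem_union_left _ (Finset.mem_union_left _ h')
        · exact Finset.mem_union_right _ h'
      · rcases Finset.mem_union.mp (ihA' h) with h' | h'
        · exact Finset.mem_union_left _ (Finset.mem_union_right _ h')
        · exact Finset.mem_union_right _ h'
  | all u A ih => exact ih
  | box A ih => exact ih

theorem psub_free {p : ℕ} {B : Fml} : ∀ A : Fml,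
    (A.psub p B).free ⊆ A.free ∪ B.free := by
  intro A
  induction A with
  | verum => simp [psub, free]
  | falsum => simp [psub, free]
  | pred P args => simp [psub, free]
  | pvar q =>
      by_cases hq : q = p
      · simp [psub, free, hq]
      · simp [psub, free, if_neg hq]
  | neg A ih => exact ih
  | imp A A' ihA ihA' =>
      simp only [psub, free]
      intro x hx
      rcases Finset.mem_union.mp hx with h | h
      · rcases Finset.mem_union.mp (ihA h) with h' | h'
        · exact Finset.mem_union_left _ (Finset.mem_union_left _ h')
        · exact Finset.mem_union_right _ h'
      · rcases Finset.mem_union.mp (ihA' h) with h' | h'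
        · exact Finset.mem_union_left _ (Finset.mem_union_right _ h')
        · exact Finset.mem_union_right _ h'
  | all u A ih =>
      simp only [psub, free]
      intro x hx
      obtain ⟨hxu, hxm⟩ := Finset.mem_erase.mp hx
      rcases Finset.mem_union.mp (ih hxm) with h | h
      · exact Finset.mem_union_left _ (Finset.mem_erase.mpr ⟨hxu, h⟩)
      · exact Finset.mem_union_right _ h
  | box A ih => exact ih

theorem fpE_pvars {p : ℕ} {A : Fml} (hp : A.pvars ⊆ {p}) :
    ∀ k, (fpE p A k).pvars = ∅ := by
  intro k
  induction k with
  | zero => rfl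
  | succ k ih =>
      have h := psub_pvars (B := fpE p A k) A hp
      rw [ih] at h
      exact Finset.subset_empty.mp h

theorem fpE_preds {p : ℕ} {A : Fml} : ∀ k, (fpE p A k).preds ⊆ A.preds := by
  intro k
  induction k with
  | zero => simp [fpE, preds]
  | succ k ih =>
      exact subset_trans (psub_preds A) (Finset.union_subset subset_rfl ih)

theorem fpE_free {p : ℕ} {A : Fml} : ∀ k, (fpE p A k).free ⊆ A.free := by
  intro k
  induction k with
  | zero => simp [fpE, free]
  | succ k ih =>
      exact subset_trans (psub_free A) (Finset.union_subset subset_rfl ih)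

end PML

open PML PML.Fml in
/-- fixed-point theorem for QK + □^{n+1}⊥. -/
theorem stmt2 (n p : ℕ) (A : Fml) (hmod : Modalized p A) (hp : A.pvars ⊆ {p}) :
    ∃ B : Fml, B.pvars = ∅ ∧ B.preds ⊆ A.preds ∧ B.free ⊆ A.free ∧
      QK ((boxIter (n + 1) Fml.falsum).imp (B.iff (A.psub p B))) := by
  refine ⟨fpE p A (n + 1), fpE_pvars hp (n + 1), fpE_preds (n + 1), fpE_free (n + 1), ?_⟩
  obtain ⟨h1, h2⟩ := fpE_fix p A hmod (n + 1)
  exact qk_land h1 h2
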